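/- Let v be a nonarchimedean place of a number field K and L_v/K_v a finite extension with ramification index e_v, inertia degree f_v, residue characteristic p_v. The transfinite diameter of the ring of integers O_{L_v} ⊂ C_v with respect to the v-adic absolute value normalized by N_v = [K_v:Q_v]/[K:Q] equals exp(−N_v·log(p_v)/(e_v(q_v^{f_v}−1))), where q_v is the order of the residue field of K_v. In particular the logarithm of this transfinite diameter is strictly negative. -/

import Mathlib

/-- The `n`-th diameter of a subset `E` of a nonarchimedean field (with respect to the
norm `‖·‖`): the transfinite diameter is `lim_n d_n(E)`. -/
noncomputable def dn {F : Type*} [NormedField F] (E : Set F) (n : ℕ) : ℝ :=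
  sSup {x : ℝ | ∃ z : Fin n → F, (∀ i, z i ∈ E) ∧
    x = (∏ ij ∈ Finset.univ.filter (fun ij : Fin n × Fin n => ij.1 ≠ ij.2),
      ‖z ij.1 - z ij.2‖) ^ (((n : ℝ) * (n - 1))⁻¹)}

open Finset Filter

section aux
variable {F : Type*} [NormedField F]

lemma na_add (hna : ∀ x y : F, ‖x + y‖ ≤ max ‖x‖ ‖y‖) {x y : F} {C : ℝ}
    (hx : ‖x‖ ≤ C) (hy : ‖y‖ ≤ C) : ‖x + y‖ ≤ C :=
  le_trans (hna x y) (max_le hx hy)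

lemma na_sub (hna : ∀ x y : F, ‖x + y‖ ≤ max ‖x‖ ‖y‖) {x y : F} {C : ℝ}
    (hx : ‖x‖ ≤ C) (hy : ‖y‖ ≤ C) : ‖x - y‖ ≤ C := by
  rw [sub_eq_add_neg]
  exact na_add hna hx (by rwa [norm_neg])

lemma na_sum (hna : ∀ x y : F, ‖x + y‖ ≤ max ‖x‖ ‖y‖) {ι : Type*} (s : Finset ι)
    (f : ι → F) {C : ℝ} (hC : 0 ≤ C) (h : ∀ i ∈ s, ‖f i‖ ≤ C) :
    ‖∑ i ∈ s, f i‖ ≤ C := by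
  induction s using Finset.cons_induction with
  | empty => simpa using hC
  | cons a s ha ih =>
    rw [Finset.sum_cons]
    exact na_add hna (h a (Finset.mem_cons_self a s))
      (ih fun i hi => h i (Finset.mem_cons_of_mem hi))

lemma na_iso (hna : ∀ x y : F, ‖x + y‖ ≤ max ‖x‖ ‖y‖) {x y : F}
    (h : ‖y‖ < ‖x‖) : ‖x + y‖ = ‖x‖ := by
  refine le_antisymm (le_trans (hna x y) (max_le le_rfl h.le)) ?_
  by_contra hlt
  push_neg at hlt
  have : ‖x‖ ≤ max ‖x + y‖ ‖y‖ := by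
    have := hna (x + y) (-y)
    simpa [norm_neg] using this
  rcases max_cases ‖x + y‖ ‖y‖ with ⟨h1, _⟩ | ⟨h1, _⟩ <;> rw [h1] at this <;> linarith

end aux

section cov
variable {F : Type*} [NormedField F]

lemma T_sep (hna : ∀ x y : F, ‖x + y‖ ≤ max ‖x‖ ‖y‖) {T : Finset F}
    (hT1 : ∀ t ∈ T, ‖t‖ ≤ 1)
    (huniq : ∀ x : F, ‖x‖ ≤ 1 → ∃! t, t ∈ T ∧ ‖x - t‖ < 1) :
    ∀ t ∈ T, ∀ t' ∈ T, t ≠ t' → ‖t - t'‖ = 1 := by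
  intro t ht t' ht' hne
  refine le_antisymm (na_sub hna (hT1 t ht) (hT1 t' ht')) ?_
  by_contra hlt
  push_neg at hlt
  obtain ⟨s, _, hu⟩ := huniq t (hT1 t ht)
  have h1 : t = s := hu t ⟨ht, by simp⟩
  have h2 : t' = s := hu t' ⟨ht', hlt⟩
  exact hne (h1.trans h2.symm)

lemma cov_exists (hna : ∀ x y : F, ‖x + y‖ ≤ max ‖x‖ ‖y‖) {T : Finset F}
    {r : ℝ} (hr0 : 0 < r) (hr1 : r < 1) {π : F} (hπ : ‖π‖ = r)
    (hcov1 : ∀ x : F, ‖x‖ ≤ 1 → ∃ t ∈ T, ‖x - t‖ < 1)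
    (hval1 : ∀ x : F, ‖x‖ < 1 → ‖x‖ ≤ r) (k : ℕ) :
    ∃ S : Finset F, S.card ≤ T.card ^ k ∧
      ∀ x : F, ‖x‖ ≤ 1 → ∃ s ∈ S, ‖x - s‖ ≤ r ^ k := by
  classical
  have hπ0 : π ≠ 0 := by
    intro h; rw [h, norm_zero] at hπ; exact absurd hπ.symm (ne_of_gt hr0)
  induction k with
  | zero =>
    refine ⟨{0}, by simp, fun x hx => ⟨0, by simp, by simpa using hx⟩⟩
  | succ k ih =>
    obtain ⟨S, hScard, hScov⟩ := ih
    refine ⟨(T ×ˢ S).image (fun ts : F × F => ts.1 + π * ts.2), ?_, ?_⟩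
    · calc ((T ×ˢ S).image (fun ts : F × F => ts.1 + π * ts.2)).card
          ≤ (T ×ˢ S).card := Finset.card_image_le
        _ = T.card * S.card := Finset.card_product T S
        _ ≤ T.card * T.card ^ k := Nat.mul_le_mul_left _ hScard
        _ = T.card ^ (k + 1) := (pow_succ T.card k).symm ▸ (mul_comm _ _)
    · intro x hx
      obtain ⟨t, ht, htx⟩ := hcov1 x hx
      have hxt : ‖x - t‖ ≤ r := by
        rcases eq_or_ne (x - t) 0 with h | h
        · rw [h, norm_zero]; exact hr0.le
        · exact hval1 _ htx
      have hy : ‖(x - t) / π‖ ≤ 1 := by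
        rw [norm_div, hπ, div_le_one hr0]; exact hxt
      obtain ⟨s, hs, hys⟩ := hScov _ hy
      refine ⟨t + π * s, Finset.mem_image.2 ⟨(t, s), Finset.mem_product.2 ⟨ht, hs⟩, rfl⟩, ?_⟩
      have : x - (t + π * s) = π * ((x - t) / π - s) := by
        field_simp; ring
      rw [this, norm_mul, hπ, pow_succ, mul_comm (r ^ k) r]
      exact mul_le_mul_of_nonneg_left hys hr0.le
end cov

section digits

lemma digits_agree_iff {Q : ℕ} (hQ : 0 < Q) (A B : ℕ) :
    ∀ k, (∀ j < k, A / Q ^ j % Q = B / Q ^ j % Q) ↔ A % Q ^ k = B % Q ^ k := by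
  intro k
  induction k with
  | zero => simp [Nat.mod_one]
  | succ k ih =>
    constructor
    · intro h
      rw [Nat.mod_pow_succ, Nat.mod_pow_succ, (ih.1 fun j hj => h j (hj.trans k.lt_succ_self)),
        h k k.lt_succ_self]
    · intro h
      have hk : A % Q ^ k = B % Q ^ k := by
        have h1 : A % Q ^ k = A % Q ^ (k+1) % Q ^ k :=
          (Nat.mod_mod_of_dvd A (pow_dvd_pow Q k.le_succ)).symm
        have h2 : B % Q ^ k = B % Q ^ (k+1) % Q ^ k :=
          (Nat.mod_mod_of_dvd B (pow_dvd_pow Q k.le_succ)).symm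
        rw [h1, h2, h]
      intro j hj
      rcases Nat.lt_succ_iff_lt_or_eq.1 hj with hj | hj
      · exact (ih.2 hk) j hj
      · subst hj
        have h1 := Nat.mod_pow_succ (x := A) (b := Q) (k := j)
        have h2 := Nat.mod_pow_succ (x := B) (b := Q) (k := j)
        rw [h, hk] at h1
        rw [h1] at h2
        have := Nat.add_left_cancel h2.symm
        exact (Nat.eq_of_mul_eq_mul_left (pow_pos hQ j) this).symm

end digits

section dnlem
variable {F : Type*} [NormedField F]

lemma dn_set_le_one (hna : ∀ x y : F, ‖x + y‖ ≤ max ‖x‖ ‖y‖) (n : ℕ) :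
    ∀ x ∈ {x : ℝ | ∃ z : Fin n → F, (∀ i, z i ∈ {x : F | ‖x‖ ≤ 1}) ∧
    x = (∏ ij ∈ Finset.univ.filter (fun ij : Fin n × Fin n => ij.1 ≠ ij.2),
      ‖z ij.1 - z ij.2‖) ^ (((n : ℝ) * (n - 1))⁻¹)}, x ≤ 1 := by
  rintro x ⟨z, hz, rfl⟩
  have h1 : (∏ ij ∈ Finset.univ.filter (fun ij : Fin n × Fin n => ij.1 ≠ ij.2),
      ‖z ij.1 - z ij.2‖) ≤ 1 :=
    Finset.prod_le_one (fun ij _ => norm_nonneg _)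
      (fun ij _ => na_sub hna (hz ij.1) (hz ij.2))
  have h0 : (0:ℝ) ≤ ∏ ij ∈ Finset.univ.filter (fun ij : Fin n × Fin n => ij.1 ≠ ij.2),
      ‖z ij.1 - z ij.2‖ := Finset.prod_nonneg fun ij _ => norm_nonneg _
  have hc : (0:ℝ) ≤ ((n : ℝ) * ((n:ℝ) - 1))⁻¹ := by
    apply inv_nonneg.2
    rcases Nat.eq_zero_or_pos n with h | h
    · simp [h]
    · have : (1:ℝ) ≤ (n:ℝ) := by exact_mod_cast h
      nlinarith
  exact Real.rpow_le_one h0 h1 hc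

lemma dn_bddAbove (hna : ∀ x y : F, ‖x + y‖ ≤ max ‖x‖ ‖y‖) (n : ℕ) :
    BddAbove {x : ℝ | ∃ z : Fin n → F, (∀ i, z i ∈ {x : F | ‖x‖ ≤ 1}) ∧
    x = (∏ ij ∈ Finset.univ.filter (fun ij : Fin n × Fin n => ij.1 ≠ ij.2),
      ‖z ij.1 - z ij.2‖) ^ (((n : ℝ) * (n - 1))⁻¹)} :=
  ⟨1, fun x hx => dn_set_le_one hna n x hx⟩

end dnlem

section config
open Finset
variable {F : Type*} [NormedField F]

lemma config_exists (hna : ∀ x y : F, ‖x + y‖ ≤ max ‖x‖ ‖y‖)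
    {r : ℝ} (hr0 : 0 < r) (hr1 : r < 1) {π : F} (hπ : ‖π‖ = r)
    {T : Finset F} (hQ : 2 ≤ T.card) (hT1 : ∀ t ∈ T, ‖t‖ ≤ 1)
    (hsep : ∀ t ∈ T, ∀ t' ∈ T, t ≠ t' → ‖t - t'‖ = 1) (n : ℕ) :
    ∃ Z : ℕ → F, (∀ A, ‖Z A‖ ≤ 1) ∧ ∀ A B, A < T.card ^ n → B < T.card ^ n → A ≠ B →
      ‖Z A - Z B‖ =
        r ^ (((Finset.Icc 1 n).filter
          (fun k => A % T.card ^ k = B % T.card ^ k)).card) := by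
  classical
  set Q := T.card with hQdef
  have hQ0 : 0 < Q := lt_of_lt_of_le two_pos hQ
  set τ : ℕ → F := fun i => if h : i < Q then ((T.equivFin.symm ⟨i, h⟩ : T) : F) else 0
    with hτdef
  have hτT : ∀ i, i < Q → τ i ∈ T := by
    intro i h
    simp only [hτdef, dif_pos h]
    exact (T.equivFin.symm ⟨i, h⟩).2
  have hτinj : ∀ i j, i < Q → j < Q → τ i = τ j → i = j := by
    intro i j hi hj hij
    simp only [hτdef, dif_pos hi, dif_pos hj] at hij
    have := T.equivFin.symm.injective (Subtype.ext hij)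
    exact congrArg Fin.val this
  refine ⟨fun A => ∑ j ∈ Finset.range n, τ (A / Q ^ j % Q) * π ^ j, ?_, ?_⟩
  · intro A
    refine na_sum hna _ _ zero_le_one fun j _ => ?_
    rw [norm_mul, norm_pow, hπ]
    exact mul_le_one₀ (hT1 _ (hτT _ (Nat.mod_lt _ hQ0)))
      (pow_nonneg hr0.le j) (pow_le_one₀ hr0.le hr1.le)
  · intro A B hA hB hAB
    have hex : ∃ j, A / Q ^ j % Q ≠ B / Q ^ j % Q := by
      by_contra h
      push_neg at h
      have := (digits_agree_iff hQ0 A B n).1 fun j _ => h j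
      rw [Nat.mod_eq_of_lt hA, Nat.mod_eq_of_lt hB] at this
      exact hAB this
    set d := Nat.find hex with hd
    have hdspec : A / Q ^ d % Q ≠ B / Q ^ d % Q := Nat.find_spec hex
    have hdmin : ∀ j < d, A / Q ^ j % Q = B / Q ^ j % Q := fun j hj =>
      not_not.1 (Nat.find_min hex hj)
    have hdn : d < n := by
      by_contra h
      push_neg at h
      have := (digits_agree_iff hQ0 A B n).1 fun j hj => hdmin j (hj.trans_le h)
      rw [Nat.mod_eq_of_lt hA, Nat.mod_eq_of_lt hB] at this
      exact hAB this
    have hcard : ((Finset.Icc 1 n).filter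
        (fun k => A % Q ^ k = B % Q ^ k)).card = d := by
      have heq : (Finset.Icc 1 n).filter (fun k => A % Q ^ k = B % Q ^ k)
          = Finset.Icc 1 d := by
        ext k
        simp only [Finset.mem_filter, Finset.mem_Icc]
        constructor
        · rintro ⟨⟨h1, _⟩, hmod⟩
          refine ⟨h1, ?_⟩
          by_contra hdk
          push_neg at hdk
          exact hdspec (((digits_agree_iff hQ0 A B k).2 hmod) d hdk)
        · rintro ⟨h1, hkd⟩
          exact ⟨⟨h1, hkd.trans hdn.le⟩,
            (digits_agree_iff hQ0 A B k).1 fun j hj => hdmin j (hj.trans_le hkd)⟩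
      rw [heq, Nat.card_Icc]
      omega
    have hsubeq : (∑ j ∈ Finset.range n, τ (A / Q ^ j % Q) * π ^ j)
        - (∑ j ∈ Finset.range n, τ (B / Q ^ j % Q) * π ^ j)
        = (τ (A / Q ^ d % Q) - τ (B / Q ^ d % Q)) * π ^ d
          + ∑ j ∈ (Finset.range n).erase d,
              (τ (A / Q ^ j % Q) - τ (B / Q ^ j % Q)) * π ^ j := by
      rw [← Finset.sum_sub_distrib]
      rw [← Finset.add_sum_erase _ _ (Finset.mem_range.2 hdn)]
      congr 1
      · rw [sub_mul]
      · exact Finset.sum_congr rfl fun j _ => (sub_mul _ _ _).symm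
    have hmain : ‖(τ (A / Q ^ d % Q) - τ (B / Q ^ d % Q)) * π ^ d‖ = r ^ d := by
      rw [norm_mul, norm_pow, hπ,
        hsep _ (hτT _ (Nat.mod_lt _ hQ0)) _ (hτT _ (Nat.mod_lt _ hQ0))
          (fun h => hdspec (hτinj _ _ (Nat.mod_lt _ hQ0) (Nat.mod_lt _ hQ0) h)),
        one_mul]
    have hrest : ‖∑ j ∈ (Finset.range n).erase d,
        (τ (A / Q ^ j % Q) - τ (B / Q ^ j % Q)) * π ^ j‖ ≤ r ^ (d + 1) := by
      refine na_sum hna _ _ (pow_nonneg hr0.le _) fun j hj => ?_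
      have hjd : j ≠ d := (Finset.mem_erase.1 hj).1
      rcases lt_or_gt_of_ne hjd with hlt | hgt
      · rw [hdmin j hlt, sub_self, zero_mul, norm_zero]
        exact pow_nonneg hr0.le _
      · rw [norm_mul, norm_pow, hπ]
        calc ‖τ (A / Q ^ j % Q) - τ (B / Q ^ j % Q)‖ * r ^ j
            ≤ 1 * r ^ j := mul_le_mul_of_nonneg_right
              (na_sub hna (hT1 _ (hτT _ (Nat.mod_lt _ hQ0)))
                (hT1 _ (hτT _ (Nat.mod_lt _ hQ0)))) (pow_nonneg hr0.le j)
          _ = r ^ j := one_mul _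
          _ ≤ r ^ (d + 1) := pow_le_pow_of_le_one hr0.le hr1.le hgt
    rw [hsubeq, hcard, na_iso hna (lt_of_le_of_lt hrest ?_), hmain]
    rw [hmain]
    exact pow_lt_pow_right_of_lt_one₀ hr0 hr1 d.lt_succ_self

end config

section counting
open Finset

lemma residue_class_card (n Q k : ℕ) (hQ0 : 0 < Q) (i : Fin n) :
    (Finset.univ.filter (fun j : Fin n => (j : ℕ) % Q ^ k = (i : ℕ) % Q ^ k)).card
      ≤ (n - 1) / Q ^ k + 1 := by
  classical
  have hle := Finset.card_le_card_of_injOn (fun j : Fin n => (j : ℕ) / Q ^ k)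
    (t := Finset.range ((n - 1) / Q ^ k + 1))
    (s := Finset.univ.filter (fun j : Fin n => (j : ℕ) % Q ^ k = (i : ℕ) % Q ^ k))
    ?_ ?_
  · simpa using hle
  · intro j _
    exact Finset.mem_range.2
      (Nat.lt_succ_of_le (Nat.div_le_div_right (Nat.le_sub_one_of_lt j.isLt)))
  · intro a ha b hb hab
    simp only [Finset.coe_filter, Set.mem_setOf_eq] at ha hb
    simp only at hab
    have : (a : ℕ) = (b : ℕ) := by
      conv_lhs => rw [← Nat.div_add_mod (a : ℕ) (Q ^ k)]
      conv_rhs => rw [← Nat.div_add_mod (b : ℕ) (Q ^ k)]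
      rw [hab, ha.2, hb.2]
    exact Fin.ext this

lemma modeq_pairs_card (n Q k : ℕ) (hQ0 : 0 < Q) :
    (((Finset.univ.filter (fun ij : Fin n × Fin n => ij.1 ≠ ij.2))).filter
      (fun ij => (ij.1 : ℕ) % Q ^ k = (ij.2 : ℕ) % Q ^ k)).card
      ≤ n * ((n - 1) / Q ^ k) := by
  classical
  set S := ((Finset.univ.filter (fun ij : Fin n × Fin n => ij.1 ≠ ij.2))).filter
      (fun ij => (ij.1 : ℕ) % Q ^ k = (ij.2 : ℕ) % Q ^ k) with hS
  have hmaps : ∀ ij ∈ S, Prod.snd ij ∈ (Finset.univ : Finset (Fin n)) :=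
    fun ij _ => Finset.mem_univ _
  rw [Finset.card_eq_sum_card_fiberwise hmaps]
  have hfib : ∀ i : Fin n, (S.filter (fun ij => ij.2 = i)).card ≤ (n - 1) / Q ^ k := by
    intro i
    have hsub : (S.filter (fun ij => ij.2 = i)).card ≤
        ((Finset.univ.filter
          (fun j : Fin n => (j : ℕ) % Q ^ k = (i : ℕ) % Q ^ k)).erase i).card := by
      apply Finset.card_le_card_of_injOn (fun ij => ij.1)
      · intro ij hij
        simp only [hS, Finset.mem_coe, Finset.mem_filter, Finset.mem_univ, true_and] at hij
        obtain ⟨⟨hne, hmod⟩, hsnd⟩ := hij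
        refine Finset.mem_erase.2 ⟨by rw [← hsnd]; exact hne, ?_⟩
        simp only [Finset.mem_filter, Finset.mem_univ, true_and]
        rw [← hsnd]; exact hmod
      · intro a ha b hb hab
        simp only [Finset.mem_coe, Finset.mem_filter] at ha hb
        exact Prod.ext hab (ha.2.trans hb.2.symm)
    refine hsub.trans ?_
    have hmem : i ∈ Finset.univ.filter
        (fun j : Fin n => (j : ℕ) % Q ^ k = (i : ℕ) % Q ^ k) := by
      simp
    rw [Finset.card_erase_of_mem hmem]
    have := residue_class_card n Q k hQ0 i
    simpa using Nat.sub_le_sub_right this 1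
  calc ∑ i : Fin n, (S.filter (fun ij => ij.2 = i)).card
      ≤ ∑ _i : Fin n, (n - 1) / Q ^ k := Finset.sum_le_sum fun i _ => hfib i
    _ = n * ((n - 1) / Q ^ k) := by
        rw [Finset.sum_const, Finset.card_univ, Fintype.card_fin, smul_eq_mul]

lemma geom_tail_le {x : ℝ} (h0 : 0 < x) (h1 : x < 1) (n : ℕ) :
    ∑ k ∈ Finset.Icc 1 n, x ^ k ≤ x / (1 - x) := by
  have hx : (0:ℝ) < 1 - x := by linarith
  rw [← Finset.Ico_add_one_right_eq_Icc, Finset.sum_Ico_eq_sum_range]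
  have hrw : ∀ i ∈ Finset.range (n + 1 - 1), x ^ (1 + i) = x * x ^ i := fun i _ => by
    rw [pow_add, pow_one]
  rw [Finset.sum_congr rfl hrw, ← Finset.mul_sum]
  have hg : ∑ i ∈ Finset.range (n + 1 - 1), x ^ i = (x ^ (n + 1 - 1) - 1)/(x - 1) :=
    geom_sum_eq h1.ne _
  rw [hg]
  have heq : (x ^ (n + 1 - 1) - 1)/(x - 1) = (1 - x ^ (n + 1 - 1))/(1 - x) := by
    rw [← neg_div_neg_eq]; ring_nf
  rw [heq]
  have hnum : 1 - x ^ (n + 1 - 1) ≤ 1 := by nlinarith [pow_nonneg h0.le (n + 1 - 1)]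
  calc x * ((1 - x ^ (n + 1 - 1)) / (1 - x)) ≤ x * (1 / (1 - x)) := by gcongr
    _ = x / (1 - x) := by rw [mul_one_div]

end counting

section lower
open Finset
variable {F : Type*} [NormedField F]

lemma dn_lower (hna : ∀ x y : F, ‖x + y‖ ≤ max ‖x‖ ‖y‖)
    {r : ℝ} (hr0 : 0 < r) (hr1 : r < 1) {π : F} (hπ : ‖π‖ = r)
    {T : Finset F} (hQ : 2 ≤ T.card) (hT1 : ∀ t ∈ T, ‖t‖ ≤ 1)
    (hsep : ∀ t ∈ T, ∀ t' ∈ T, t ≠ t' → ‖t - t'‖ = 1)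
    {n : ℕ} (hn : 2 ≤ n) :
    r ^ (((T.card : ℝ) - 1)⁻¹) ≤ dn {x : F | ‖x‖ ≤ 1} n := by
  classical
  set Q := T.card with hQdef
  have hQ0 : 0 < Q := lt_of_lt_of_le two_pos hQ
  have hQ1 : 1 < Q := lt_of_lt_of_le one_lt_two hQ
  have hQR : (1:ℝ) < (Q:ℝ) := by exact_mod_cast hQ1
  obtain ⟨Z, hZ1, hZd⟩ := config_exists hna hr0 hr1 hπ hQ hT1 hsep n
  set z : Fin n → F := fun i => Z (i : ℕ) with hzdef
  have hlt : ∀ i : Fin n, (i : ℕ) < Q ^ n :=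
    fun i => lt_trans i.isLt (Nat.lt_pow_self (n := n) hQ1)
  set pairs := Finset.univ.filter (fun ij : Fin n × Fin n => ij.1 ≠ ij.2) with hpairs
  set w : Fin n × Fin n → ℕ := fun ij => ((Finset.Icc 1 n).filter
    (fun k => (ij.1 : ℕ) % Q ^ k = (ij.2 : ℕ) % Q ^ k)).card with hwdef
  have hprod : (∏ ij ∈ pairs, ‖z ij.1 - z ij.2‖) = r ^ (∑ ij ∈ pairs, w ij) := by
    rw [← Finset.prod_pow_eq_pow_sum]
    refine Finset.prod_congr rfl fun ij hij => ?_
    have hne : (ij.1 : ℕ) ≠ (ij.2 : ℕ) := by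
      have := (Finset.mem_filter.1 hij).2
      exact fun h => this (Fin.ext h)
    exact hZd _ _ (hlt ij.1) (hlt ij.2) hne
  -- sum bound
  have hsumnat : (∑ ij ∈ pairs, w ij) = ∑ k ∈ Finset.Icc 1 n,
      ((pairs.filter (fun ij : Fin n × Fin n =>
        (ij.1 : ℕ) % Q ^ k = (ij.2 : ℕ) % Q ^ k)).card) := by
    simp only [hwdef, Finset.card_filter]
    rw [Finset.sum_comm]
  have hsumle : ((∑ ij ∈ pairs, w ij : ℕ) : ℝ) ≤ (n : ℝ) * ((n : ℝ) - 1) / ((Q : ℝ) - 1) := by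
    rw [hsumnat]
    push_cast
    have hstep : ∀ k ∈ Finset.Icc 1 n,
        (((pairs.filter (fun ij : Fin n × Fin n =>
          (ij.1 : ℕ) % Q ^ k = (ij.2 : ℕ) % Q ^ k)).card : ℝ))
          ≤ (n : ℝ) * ((n : ℝ) - 1) * ((Q : ℝ)⁻¹) ^ k := by
      intro k _
      have h1 : ((pairs.filter (fun ij : Fin n × Fin n =>
          (ij.1 : ℕ) % Q ^ k = (ij.2 : ℕ) % Q ^ k)).card : ℝ)
          ≤ ((n * ((n - 1) / Q ^ k) : ℕ) : ℝ) := by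
        exact_mod_cast modeq_pairs_card n Q k hQ0
      refine h1.trans ?_
      push_cast
      have h2 : (((n - 1) / Q ^ k : ℕ) : ℝ) ≤ ((n - 1 : ℕ) : ℝ) / ((Q ^ k : ℕ) : ℝ) :=
        Nat.cast_div_le
      have h3 : ((n - 1 : ℕ) : ℝ) = (n : ℝ) - 1 := by
        have : (1:ℕ) ≤ n := le_trans one_le_two hn
        push_cast [this]
        ring
      calc (n : ℝ) * (((n - 1) / Q ^ k : ℕ) : ℝ)
          ≤ (n : ℝ) * (((n - 1 : ℕ) : ℝ) / ((Q ^ k : ℕ) : ℝ)) := by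
            apply mul_le_mul_of_nonneg_left h2 (Nat.cast_nonneg n)
        _ = (n : ℝ) * ((n : ℝ) - 1) * ((Q : ℝ)⁻¹) ^ k := by
            rw [h3]
            push_cast
            rw [inv_pow]
            ring
    calc ∑ k ∈ Finset.Icc 1 n, (((pairs.filter (fun ij : Fin n × Fin n =>
          (ij.1 : ℕ) % Q ^ k = (ij.2 : ℕ) % Q ^ k)).card : ℝ))
        ≤ ∑ k ∈ Finset.Icc 1 n, (n : ℝ) * ((n : ℝ) - 1) * ((Q : ℝ)⁻¹) ^ k :=
          Finset.sum_le_sum hstep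
      _ = (n : ℝ) * ((n : ℝ) - 1) * ∑ k ∈ Finset.Icc 1 n, ((Q : ℝ)⁻¹) ^ k := by
          rw [Finset.mul_sum]
      _ ≤ (n : ℝ) * ((n : ℝ) - 1) * ((Q : ℝ)⁻¹ / (1 - (Q : ℝ)⁻¹)) := by
          have hn1 : (0:ℝ) ≤ (n : ℝ) * ((n : ℝ) - 1) := by
            have : (2:ℝ) ≤ (n:ℝ) := by exact_mod_cast hn
            nlinarith
          exact mul_le_mul_of_nonneg_left
            (geom_tail_le (inv_pos.2 (lt_trans zero_lt_one hQR))
              (inv_lt_one_of_one_lt₀ hQR) n) hn1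
      _ = (n : ℝ) * ((n : ℝ) - 1) / ((Q : ℝ) - 1) := by
          have hQne : (Q:ℝ) ≠ 0 := by linarith
          have hQm1ne : (Q:ℝ) - 1 ≠ 0 := by linarith
          rw [eq_div_iff hQm1ne]
          have h2 : (1:ℝ) - (Q:ℝ)⁻¹ ≠ 0 := by
            have : (Q:ℝ)⁻¹ < 1 := inv_lt_one_of_one_lt₀ hQR
            intro h; rw [sub_eq_zero] at h; exact absurd h.symm this.ne
          field_simp
  -- now the rpow chain
  have hnn : (0:ℝ) < (n : ℝ) * ((n : ℝ) - 1) := by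
    have : (2:ℝ) ≤ (n:ℝ) := by exact_mod_cast hn
    nlinarith
  have hQm1 : (0:ℝ) < (Q : ℝ) - 1 := by linarith
  have hPge : r ^ ((n : ℝ) * ((n : ℝ) - 1) / ((Q : ℝ) - 1))
      ≤ (∏ ij ∈ pairs, ‖z ij.1 - z ij.2‖) := by
    rw [hprod, ← Real.rpow_natCast r (∑ ij ∈ pairs, w ij)]
    exact Real.rpow_le_rpow_of_exponent_ge hr0 hr1.le hsumle
  have hmem : (∏ ij ∈ pairs, ‖z ij.1 - z ij.2‖) ^ (((n : ℝ) * ((n:ℝ) - 1))⁻¹)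
      ∈ {x : ℝ | ∃ z : Fin n → F, (∀ i, z i ∈ {x : F | ‖x‖ ≤ 1}) ∧
        x = (∏ ij ∈ Finset.univ.filter (fun ij : Fin n × Fin n => ij.1 ≠ ij.2),
          ‖z ij.1 - z ij.2‖) ^ (((n : ℝ) * (n - 1))⁻¹)} :=
    ⟨z, fun i => hZ1 _, rfl⟩
  have hxge : r ^ (((Q : ℝ) - 1)⁻¹)
      ≤ (∏ ij ∈ pairs, ‖z ij.1 - z ij.2‖) ^ (((n : ℝ) * ((n:ℝ) - 1))⁻¹) := by
    have h1 : (r ^ ((n : ℝ) * ((n : ℝ) - 1) / ((Q : ℝ) - 1)))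
        ^ (((n : ℝ) * ((n:ℝ) - 1))⁻¹)
        ≤ (∏ ij ∈ pairs, ‖z ij.1 - z ij.2‖) ^ (((n : ℝ) * ((n:ℝ) - 1))⁻¹) :=
      Real.rpow_le_rpow (Real.rpow_nonneg hr0.le _) hPge (inv_nonneg.2 hnn.le)
    refine le_trans (le_of_eq ?_) h1
    rw [← Real.rpow_mul hr0.le]
    congr 1
    field_simp
    exact (div_self (by have : (2:ℝ) ≤ (n:ℝ) := by exact_mod_cast hn
                        linarith)).symm
  calc r ^ (((Q : ℝ) - 1)⁻¹)
      ≤ (∏ ij ∈ pairs, ‖z ij.1 - z ij.2‖) ^ (((n : ℝ) * ((n:ℝ) - 1))⁻¹) := hxge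
    _ ≤ dn {x : F | ‖x‖ ≤ 1} n := le_csSup (dn_bddAbove hna n) hmem

end lower

section upper
open Finset
variable {F : Type*} [NormedField F]

lemma dn_upper (hna : ∀ x y : F, ‖x + y‖ ≤ max ‖x‖ ‖y‖)
    {r : ℝ} (hr0 : 0 < r) (hr1 : r < 1) {Q : ℕ} (hQ : 2 ≤ Q)
    (hcov : ∀ k : ℕ, ∃ S : Finset F, S.card ≤ Q ^ k ∧
      ∀ x : F, ‖x‖ ≤ 1 → ∃ s ∈ S, ‖x - s‖ ≤ r ^ k)
    (hvnat : ∀ x : F, x ≠ 0 → ‖x‖ ≤ 1 → ∃ k : ℕ, ‖x‖ = r ^ k)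
    {n : ℕ} (hn : 2 ≤ n) (K : ℕ) :
    dn {x : F | ‖x‖ ≤ 1} n ≤
      r ^ ((((n:ℝ)^2 * ∑ k ∈ Finset.Icc 1 K, ((Q:ℝ)⁻¹)^k) - K * n)
        / ((n:ℝ) * ((n:ℝ) - 1))) := by
  classical
  have hnn : (0:ℝ) < (n : ℝ) * ((n : ℝ) - 1) := by
    have : (2:ℝ) ≤ (n:ℝ) := by exact_mod_cast hn
    nlinarith
  set B : ℝ := (((n:ℝ)^2 * ∑ k ∈ Finset.Icc 1 K, ((Q:ℝ)⁻¹)^k) - K * n) with hB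
  apply Real.sSup_le _ (Real.rpow_nonneg hr0.le _)
  rintro x ⟨z, hz, rfl⟩
  set pairs := Finset.univ.filter (fun ij : Fin n × Fin n => ij.1 ≠ ij.2) with hpairs
  by_cases hcol : ∃ ij ∈ pairs, z ij.1 = z ij.2
  · obtain ⟨ij, hij, hcoll⟩ := hcol
    have hP : (∏ ij ∈ pairs, ‖z ij.1 - z ij.2‖) = 0 :=
      Finset.prod_eq_zero hij (by rw [hcoll, sub_self, norm_zero])
    rw [hP, Real.zero_rpow (by positivity)]
    exact Real.rpow_nonneg hr0.le _
  · push_neg at hcol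
    have hvex : ∀ ij : Fin n × Fin n, ∃ k : ℕ,
        ij ∈ pairs → ‖z ij.1 - z ij.2‖ = r ^ k := by
      intro ij
      by_cases h : ij ∈ pairs
      · obtain ⟨k, hk⟩ := hvnat (z ij.1 - z ij.2) (sub_ne_zero.2 (hcol ij h))
          (na_sub hna (hz ij.1) (hz ij.2))
        exact ⟨k, fun _ => hk⟩
      · exact ⟨0, fun hh => absurd hh h⟩
    choose v hv using hvex
    have hprod : (∏ ij ∈ pairs, ‖z ij.1 - z ij.2‖) = r ^ (∑ ij ∈ pairs, v ij) := by
      rw [← Finset.prod_pow_eq_pow_sum]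
      exact Finset.prod_congr rfl fun ij hij => hv ij hij
    -- counting
    have hAk : ∀ k : ℕ, (n:ℝ)^2 * ((Q:ℝ)⁻¹)^k - n ≤
        ((pairs.filter (fun ij => k ≤ v ij)).card : ℝ) := by
      intro k
      obtain ⟨S, hScard, hScov⟩ := hcov k
      choose c hc1 hc2 using fun i : Fin n => hScov (z i) (hz i)
      set f : F → ℕ := fun s => (Finset.univ.filter (fun i : Fin n => c i = s)).card
        with hf
      have hsumf : ∑ s ∈ S, f s = n := by
        have := Finset.card_eq_sum_card_fiberwise
          (fun i (_ : i ∈ (Finset.univ : Finset (Fin n))) => hc1 i)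
        simpa using this.symm
      have hCset : ((Finset.univ : Finset (Fin n × Fin n)).filter
          (fun ij => c ij.1 = c ij.2)).card = ∑ s ∈ S, (f s) * (f s) := by
        rw [Finset.card_filter]
        rw [Fintype.sum_prod_type]
        have hinner : ∀ i : Fin n,
            (∑ j : Fin n, if c i = c j then 1 else 0) = f (c i) := by
          intro i
          calc (∑ j : Fin n, if c i = c j then 1 else 0)
              = ∑ j : Fin n, (if c j = c i then 1 else 0) :=
                Finset.sum_congr rfl fun j _ => by simp [eq_comm]
            _ = f (c i) := (Finset.card_filter _ _).symm
        rw [Finset.sum_congr rfl fun i _ => hinner i]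
        have := Finset.sum_fiberwise_of_maps_to
          (fun i (_ : i ∈ (Finset.univ : Finset (Fin n))) => hc1 i)
          (fun i => f (c i))
        rw [← this]
        refine Finset.sum_congr rfl fun s hs => ?_
        have : ∀ i ∈ Finset.univ.filter (fun i : Fin n => c i = s),
            f (c i) = f s := by
          intro i hi
          rw [(Finset.mem_filter.1 hi).2]
        rw [Finset.sum_congr rfl this, Finset.sum_const, smul_eq_mul]
      have hCS : ((n:ℝ))^2 ≤ (S.card : ℝ) * (((Finset.univ : Finset (Fin n × Fin n)).filter
          (fun ij => c ij.1 = c ij.2)).card : ℝ) := by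
        have := Finset.sum_mul_sq_le_sq_mul_sq S (fun s => ((f s : ℝ))) (fun _ => 1)
        simp only [mul_one, one_pow, Finset.sum_const, smul_eq_mul, nsmul_eq_mul] at this
        have h1 : ((n:ℝ)) = ∑ s ∈ S, ((f s : ℝ)) := by
          rw [← hsumf]; push_cast; rfl
        rw [hCset]
        push_cast
        calc ((n:ℝ))^2 = (∑ s ∈ S, ((f s : ℝ)))^2 := by rw [h1]
          _ ≤ (∑ s ∈ S, ((f s : ℝ))^2) * (S.card) := this
          _ = (S.card : ℝ) * ∑ s ∈ S, ((f s:ℝ) * (f s:ℝ)) := by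
              rw [mul_comm]
              congr 1
              exact Finset.sum_congr rfl fun s _ => (sq ((f s : ℝ))) ▸ by ring
      have hsubset : ((Finset.univ : Finset (Fin n × Fin n)).filter
          (fun ij => c ij.1 = c ij.2)).card ≤
          (pairs.filter (fun ij => k ≤ v ij)).card + n := by
        have hsplit : ((Finset.univ : Finset (Fin n × Fin n)).filter
            (fun ij => c ij.1 = c ij.2)) ⊆
            (pairs.filter (fun ij => k ≤ v ij)) ∪
              ((Finset.univ : Finset (Fin n × Fin n)).filter (fun ij => ij.1 = ij.2)) := by
          intro ij hij
          have hcij := (Finset.mem_filter.1 hij).2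
          by_cases hd : ij.1 = ij.2
          · exact Finset.mem_union_right _ (Finset.mem_filter.2 ⟨Finset.mem_univ _, hd⟩)
          · apply Finset.mem_union_left
            have hijp : ij ∈ pairs := Finset.mem_filter.2 ⟨Finset.mem_univ _, hd⟩
            refine Finset.mem_filter.2 ⟨hijp, ?_⟩
            have hclose : ‖z ij.1 - z ij.2‖ ≤ r ^ k := by
              have : z ij.1 - z ij.2 = (z ij.1 - c ij.1) - (z ij.2 - c ij.2) := by
                rw [hcij]; ring
              rw [this]
              exact na_sub hna (hc2 ij.1) (hc2 ij.2)
            by_contra hkv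
            push_neg at hkv
            have := pow_lt_pow_right_of_lt_one₀ hr0 hr1 hkv
            rw [← hv ij hijp] at this
            exact absurd hclose (not_le.2 this)
        calc ((Finset.univ : Finset (Fin n × Fin n)).filter
              (fun ij => c ij.1 = c ij.2)).card
            ≤ ((pairs.filter (fun ij => k ≤ v ij)) ∪
              ((Finset.univ : Finset (Fin n × Fin n)).filter
                (fun ij => ij.1 = ij.2))).card := Finset.card_le_card hsplit
          _ ≤ (pairs.filter (fun ij => k ≤ v ij)).card +
              ((Finset.univ : Finset (Fin n × Fin n)).filter
                (fun ij => ij.1 = ij.2)).card := Finset.card_union_le _ _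
          _ ≤ (pairs.filter (fun ij => k ≤ v ij)).card + n := by
              have : ((Finset.univ : Finset (Fin n × Fin n)).filter
                  (fun ij => ij.1 = ij.2)).card ≤ n := by
                have := Finset.card_le_card_of_injOn (fun ij : Fin n × Fin n => ij.1)
                  (s := (Finset.univ : Finset (Fin n × Fin n)).filter
                    (fun ij => ij.1 = ij.2))
                  (t := Finset.univ)
                  (fun ij _ => Finset.mem_univ _) ?_
                · simpa using this
                · intro a ha b hb hab
                  simp only [Finset.coe_filter, Set.mem_setOf_eq] at ha hb
                  exact Prod.ext hab (ha.2 ▸ hb.2 ▸ hab)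
              omega
      -- combine
      have hQk : (0:ℝ) < (Q:ℝ)^k := by positivity
      have hchain : ((n:ℝ))^2 ≤ (Q:ℝ)^k *
          (((pairs.filter (fun ij => k ≤ v ij)).card : ℝ) + n) := by
        calc ((n:ℝ))^2 ≤ (S.card : ℝ) * (((Finset.univ : Finset (Fin n × Fin n)).filter
              (fun ij => c ij.1 = c ij.2)).card : ℝ) := hCS
          _ ≤ (Q:ℝ)^k * (((pairs.filter (fun ij => k ≤ v ij)).card : ℝ) + n) := by
              apply mul_le_mul
              · exact_mod_cast le_trans (Nat.cast_le.2 hScard) (by push_cast; exact le_refl _)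
              · exact_mod_cast hsubset
              · positivity
              · positivity
      rw [inv_pow, ← div_eq_mul_inv, sub_le_iff_le_add, div_le_iff₀ hQk]
      calc ((n:ℝ))^2 ≤ (Q:ℝ)^k *
            (((pairs.filter (fun ij => k ≤ v ij)).card : ℝ) + n) := hchain
        _ = (((pairs.filter (fun ij => k ≤ v ij)).card : ℝ) + (n:ℝ)) * (Q:ℝ)^k := by ring
    -- sum over k
    have hswap : ∑ k ∈ Finset.Icc 1 K, (pairs.filter (fun ij => k ≤ v ij)).card
        ≤ ∑ ij ∈ pairs, v ij := by
      have h1 : ∀ k ∈ Finset.Icc 1 K, (pairs.filter (fun ij => k ≤ v ij)).card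
          = ∑ ij ∈ pairs, if k ≤ v ij then 1 else 0 := fun k _ => Finset.card_filter _ _
      rw [Finset.sum_congr rfl h1, Finset.sum_comm]
      apply Finset.sum_le_sum
      intro ij _
      have : ∑ k ∈ Finset.Icc 1 K, (if k ≤ v ij then 1 else 0)
          = ((Finset.Icc 1 K).filter (fun k => k ≤ v ij)).card :=
        (Finset.card_filter _ _).symm
      rw [this]
      have hsub : (Finset.Icc 1 K).filter (fun k => k ≤ v ij) ⊆ Finset.Icc 1 (v ij) := by
        intro k hk
        simp only [Finset.mem_filter, Finset.mem_Icc] at hk ⊢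
        exact ⟨hk.1.1, hk.2⟩
      calc ((Finset.Icc 1 K).filter (fun k => k ≤ v ij)).card
          ≤ (Finset.Icc 1 (v ij)).card := Finset.card_le_card hsub
        _ = v ij := by rw [Nat.card_Icc]; omega
    have hsumge : B ≤ ((∑ ij ∈ pairs, v ij : ℕ) : ℝ) := by
      rw [hB]
      have h2 : ∑ k ∈ Finset.Icc 1 K, ((n:ℝ)^2 * ((Q:ℝ)⁻¹)^k - n)
          ≤ ∑ k ∈ Finset.Icc 1 K,
            (((pairs.filter (fun ij => k ≤ v ij)).card : ℝ)) :=
        Finset.sum_le_sum fun k _ => hAk k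
      have h3 : ∑ k ∈ Finset.Icc 1 K, ((n:ℝ)^2 * ((Q:ℝ)⁻¹)^k - n)
          = (n:ℝ)^2 * (∑ k ∈ Finset.Icc 1 K, ((Q:ℝ)⁻¹)^k) - K * n := by
        rw [Finset.sum_sub_distrib, ← Finset.mul_sum, Finset.sum_const, Nat.card_Icc]
        simp only [Nat.add_sub_cancel, nsmul_eq_mul]
      have h4 : (∑ k ∈ Finset.Icc 1 K,
          (((pairs.filter (fun ij => k ≤ v ij)).card : ℝ)))
          ≤ ((∑ ij ∈ pairs, v ij : ℕ) : ℝ) := by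
        have := hswap
        push_cast
        exact_mod_cast this
      linarith
    rw [hprod, ← Real.rpow_natCast r (∑ ij ∈ pairs, v ij)]
    have hPle : r ^ (((∑ ij ∈ pairs, v ij : ℕ)) : ℝ) ≤ r ^ B :=
      Real.rpow_le_rpow_of_exponent_ge hr0 hr1.le hsumge
    calc (r ^ (((∑ ij ∈ pairs, v ij : ℕ)) : ℝ)) ^ (((n:ℝ) * ((n:ℝ) - 1))⁻¹)
        ≤ (r ^ B) ^ (((n:ℝ) * ((n:ℝ) - 1))⁻¹) :=
          Real.rpow_le_rpow (Real.rpow_nonneg hr0.le _) hPle (inv_nonneg.2 hnn.le)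
      _ = r ^ (B / ((n:ℝ) * ((n:ℝ) - 1))) := by
          rw [← Real.rpow_mul hr0.le, div_eq_mul_inv]

end upper

section limits
open Filter

lemma sqrt_tendsto_atTop : Tendsto Nat.sqrt atTop atTop :=
  Filter.tendsto_atTop_atTop.2 fun b => ⟨b * b, fun n hn => Nat.le_sqrt.2 hn⟩

lemma geom_icc_tendsto {x : ℝ} (h0 : 0 < x) (h1 : x < 1) :
    Tendsto (fun K => ∑ k ∈ Finset.Icc 1 K, x ^ k) atTop (nhds (x / (1 - x))) := by
  have hx : (0:ℝ) < 1 - x := by linarith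
  have heq : ∀ K : ℕ, ∑ k ∈ Finset.Icc 1 K, x ^ k = x * ((x ^ K - 1) / (x - 1)) := by
    intro K
    rw [← Finset.Ico_add_one_right_eq_Icc, Finset.sum_Ico_eq_sum_range]
    have hrw : ∀ i ∈ Finset.range (K + 1 - 1), x ^ (1 + i) = x * x ^ i := fun i _ => by
      rw [pow_add, pow_one]
    rw [Finset.sum_congr rfl hrw, ← Finset.mul_sum, geom_sum_eq h1.ne]
    norm_num
  have hlim : Tendsto (fun K : ℕ => x * ((x ^ K - 1) / (x - 1))) atTop
      (nhds (x * ((0 - 1) / (x - 1)))) := by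
    apply Tendsto.const_mul
    apply Tendsto.div_const
    exact Tendsto.sub_const (tendsto_pow_atTop_nhds_zero_of_lt_one h0.le h1) 1
  have : x * ((0 - 1) / (x - 1)) = x / (1 - x) := by
    have h2 : (0 - 1 : ℝ) / (x - 1) = 1 / (1 - x) := by
      rw [div_eq_div_iff (by linarith) (by linarith)]
      ring
    rw [h2, mul_one_div]
  rw [← this]
  exact Tendsto.congr (fun K => (heq K).symm) hlim

lemma sqrt_div_tendsto_zero :
    Tendsto (fun n : ℕ => (Nat.sqrt n : ℝ) / ((n : ℝ) - 1)) atTop (nhds 0) := by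
  apply squeeze_zero' (g := fun n : ℕ => 2 / (Nat.sqrt n : ℝ))
  · filter_upwards [eventually_ge_atTop 2] with n hn
    apply div_nonneg (Nat.cast_nonneg _)
    have : (2:ℝ) ≤ (n:ℝ) := by exact_mod_cast hn
    linarith
  · filter_upwards [eventually_ge_atTop 2] with n hn
    have hs1 : 1 ≤ Nat.sqrt n := Nat.le_sqrt.2 (by omega)
    have hsR : (1:ℝ) ≤ (Nat.sqrt n : ℝ) := by exact_mod_cast hs1
    have hnR : (2:ℝ) ≤ (n:ℝ) := by exact_mod_cast hn
    have hsq : ((Nat.sqrt n : ℝ)) * ((Nat.sqrt n : ℝ)) ≤ (n:ℝ) := by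
      exact_mod_cast Nat.sqrt_le n
    rw [div_le_div_iff₀ (by linarith) (by linarith)]
    nlinarith
  · exact Tendsto.div_atTop tendsto_const_nhds
      (tendsto_natCast_atTop_atTop.comp sqrt_tendsto_atTop)

lemma nat_ratio_tendsto_one :
    Tendsto (fun n : ℕ => (n : ℝ) / ((n : ℝ) - 1)) atTop (nhds 1) := by
  have hinv : Tendsto (fun n : ℕ => ((n : ℝ) - 1)⁻¹) atTop (nhds 0) :=
    Tendsto.inv_tendsto_atTop
      (Filter.tendsto_atTop_add_const_right atTop (-1) tendsto_natCast_atTop_atTop)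
  have h1 : Tendsto (fun n : ℕ => 1 + ((n : ℝ) - 1)⁻¹) atTop (nhds (1 + 0)) :=
    Tendsto.const_add 1 hinv
  rw [add_zero] at h1
  apply Tendsto.congr' _ h1
  filter_upwards [eventually_ge_atTop 2] with n hn
  have h2 : (2:ℝ) ≤ (n:ℝ) := by exact_mod_cast hn
  have h3 : (n:ℝ) - 1 ≠ 0 := by linarith
  field_simp
  ring

end limits


/-- Let `L_v/K_v` be a finite extension of nonarchimedean local fields with ramification
index `e`, inertia degree `f`, residue characteristic `p`, where `q` is the order of the
residue field of `K_v` (a power of `p`); `L_v` is realized as a nonarchimedean normed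
field whose ring of integers `O = {x : ‖x‖ ≤ 1}` has uniformizer `π` of norm `p^{-1/e}`
and residue field of order `q^f`.  Then the transfinite diameter of `O` with respect to
the absolute value normalized by `N = N_v = [K_v:ℚ_v]/[K:ℚ]` (i.e. `|·| = ‖·‖^N`) equals
`exp(-N·log p /(e(q^f - 1)))`; in particular its logarithm is strictly negative. -/
theorem statement2 {F : Type*} [NormedField F]
    (hna : ∀ x y : F, ‖x + y‖ ≤ max ‖x‖ ‖y‖)
    (p : ℕ) (hp : p.Prime) (e fdeg : ℕ) (he : 0 < e) (hf : 0 < fdeg)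
    (q : ℕ) (hq : ∃ m : ℕ, 0 < m ∧ q = p ^ m)
    (π : F) (hπ : ‖π‖ = (p : ℝ) ^ (-(1 : ℝ) / e))
    (hval : ∀ x : F, x ≠ 0 → ∃ k : ℤ, ‖x‖ = ((p : ℝ) ^ (-(1 : ℝ) / e)) ^ k)
    (hres : ∃ T : Finset F, T.card = q ^ fdeg ∧ (∀ t ∈ T, ‖t‖ ≤ 1) ∧
      ∀ x : F, ‖x‖ ≤ 1 → ∃! t, t ∈ T ∧ ‖x - t‖ < 1)
    (N : ℝ) (hN : 0 < N) :
    Filter.Tendsto (fun n => dn {x : F | ‖x‖ ≤ 1} n ^ N) Filter.atTop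
      (nhds (Real.exp (-(N * Real.log p / (e * ((q : ℝ) ^ fdeg - 1))))))
    ∧ Real.log (Real.exp (-(N * Real.log p / (e * ((q : ℝ) ^ fdeg - 1))))) < 0 := by
  classical
  obtain ⟨T, hTcard, hT1, hTuniq⟩ := hres
  set r : ℝ := (p:ℝ) ^ (-(1:ℝ)/e) with hrdef
  have hp2 : 2 ≤ p := hp.two_le
  have hpR : (1:ℝ) < (p:ℝ) := by exact_mod_cast hp.one_lt
  have heR : (0:ℝ) < (e:ℝ) := by exact_mod_cast he
  have hr0 : 0 < r := Real.rpow_pos_of_pos (by linarith) _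
  have hr1 : r < 1 := Real.rpow_lt_one_of_one_lt_of_neg hpR
    (div_neg_of_neg_of_pos (by norm_num) heR)
  set Q : ℕ := q ^ fdeg with hQdef
  have hq2 : 2 ≤ q := by
    obtain ⟨m, hm, rfl⟩ := hq
    calc 2 ≤ p := hp2
      _ ≤ p ^ m := Nat.le_self_pow hm.ne' p
  have hQ2 : 2 ≤ Q := le_trans hq2 (Nat.le_self_pow hf.ne' q)
  have hTQ : T.card = Q := hTcard
  have hQR1 : (1:ℝ) < (Q:ℝ) := by exact_mod_cast lt_of_lt_of_le one_lt_two hQ2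
  have hanti : StrictAnti (fun k : ℤ => r ^ k) := zpow_right_strictAnti₀ hr0 hr1
  have hval1 : ∀ x : F, ‖x‖ < 1 → ‖x‖ ≤ r := by
    intro x hx
    rcases eq_or_ne x 0 with rfl | hx0
    · rw [norm_zero]; exact hr0.le
    · obtain ⟨k, hk⟩ := hval x hx0
      rw [hk] at hx ⊢
      have hk1 : (1:ℤ) ≤ k := by
        by_contra h
        push_neg at h
        have : r ^ (0:ℤ) ≤ r ^ k := hanti.le_iff_ge.2 (by omega)
        rw [zpow_zero] at this
        linarith
      calc r ^ k ≤ r ^ (1:ℤ) := hanti.le_iff_ge.2 hk1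
        _ = r := zpow_one r
  have hvnat : ∀ x : F, x ≠ 0 → ‖x‖ ≤ 1 → ∃ kn : ℕ, ‖x‖ = r ^ kn := by
    intro x hx0 hx1
    obtain ⟨k, hk⟩ := hval x hx0
    have hk0 : (0:ℤ) ≤ k := by
      by_contra h
      push_neg at h
      have : r ^ (0:ℤ) < r ^ k := hanti h
      rw [zpow_zero] at this
      rw [hk] at hx1
      linarith
    refine ⟨k.toNat, ?_⟩
    rw [hk, ← zpow_natCast, Int.toNat_of_nonneg hk0]
  have hcov1 : ∀ x : F, ‖x‖ ≤ 1 → ∃ t ∈ T, ‖x - t‖ < 1 := by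
    intro x hx
    obtain ⟨t, ⟨ht, htx⟩, _⟩ := hTuniq x hx
    exact ⟨t, ht, htx⟩
  have hsep := T_sep hna hT1 hTuniq
  have hπr : ‖π‖ = r := hπ
  have hcov : ∀ k : ℕ, ∃ S : Finset F, S.card ≤ Q ^ k ∧
      ∀ x : F, ‖x‖ ≤ 1 → ∃ s ∈ S, ‖x - s‖ ≤ r ^ k := by
    intro k
    obtain ⟨S, h1, h2⟩ := cov_exists hna hr0 hr1 hπr hcov1 hval1 k
    exact ⟨S, hTQ ▸ h1, h2⟩
  set D : ℝ := r ^ (((Q:ℝ) - 1)⁻¹) with hDdef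
  have hD0 : 0 < D := Real.rpow_pos_of_pos hr0 _
  set σ : ℕ → ℝ := fun n => ∑ k ∈ Finset.Icc 1 (Nat.sqrt n), ((Q:ℝ)⁻¹)^k with hσdef
  have hx0 : (0:ℝ) < (Q:ℝ)⁻¹ := inv_pos.2 (by linarith)
  have hx1 : (Q:ℝ)⁻¹ < 1 := inv_lt_one_of_one_lt₀ hQR1
  have hQm1ne : ((Q:ℝ) - 1) ≠ 0 := by linarith
  have key : ((Q:ℝ))⁻¹ / (1 - ((Q:ℝ))⁻¹) = (((Q:ℝ)) - 1)⁻¹ := by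
    have hq0 : (Q:ℝ) ≠ 0 := by linarith
    have h1m : 1 - (Q:ℝ)⁻¹ ≠ 0 := by
      intro h
      rw [sub_eq_zero] at h
      exact absurd h.symm hx1.ne
    field_simp
  have hσlim : Tendsto σ atTop (nhds (((Q:ℝ)-1)⁻¹)) := by
    have h := (geom_icc_tendsto hx0 hx1).comp sqrt_tendsto_atTop
    rw [key] at h
    exact h
  set u : ℕ → ℝ := fun n =>
    (((n:ℝ)^2 * σ n) - (Nat.sqrt n : ℝ) * n) / ((n:ℝ) * ((n:ℝ) - 1)) with hudef
  have hulim : Tendsto u atTop (nhds (((Q:ℝ)-1)⁻¹)) := by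
    have hmain : Tendsto (fun n : ℕ => ((n:ℝ)/((n:ℝ)-1)) * σ n
        - (Nat.sqrt n : ℝ)/((n:ℝ)-1)) atTop (nhds (1 * ((Q:ℝ)-1)⁻¹ - 0)) :=
      Tendsto.sub (Tendsto.mul nat_ratio_tendsto_one hσlim) sqrt_div_tendsto_zero
    rw [one_mul, sub_zero] at hmain
    apply Tendsto.congr' _ hmain
    filter_upwards [eventually_ge_atTop 2] with n hn
    have h2 : (2:ℝ) ≤ (n:ℝ) := by exact_mod_cast hn
    have hn0 : (n:ℝ) ≠ 0 := by linarith
    have hn1 : (n:ℝ) - 1 ≠ 0 := by linarith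
    rw [hudef]
    field_simp
  have hU : Tendsto (fun n : ℕ => r ^ (u n)) atTop (nhds D) := by
    have h := (Real.continuous_exp.tendsto (Real.log r * (((Q:ℝ)-1)⁻¹))).comp
      (hulim.const_mul (Real.log r))
    have heqf : ∀ n : ℕ, Real.exp (Real.log r * (u n)) = r ^ (u n) :=
      fun n => (Real.rpow_def_of_pos hr0 (u n)).symm
    have hD' : D = Real.exp (Real.log r * (((Q:ℝ)-1)⁻¹)) :=
      Real.rpow_def_of_pos hr0 _
    rw [hD']
    exact Tendsto.congr heqf h
  have hlower : ∀ᶠ n in atTop, D ≤ dn {x : F | ‖x‖ ≤ 1} n := by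
    filter_upwards [eventually_ge_atTop 2] with n hn
    have := dn_lower hna hr0 hr1 hπr (by rw [hTQ]; exact hQ2) hT1 hsep hn
    · rw [hTQ] at this
      exact this
  have hupper : ∀ᶠ n in atTop, dn {x : F | ‖x‖ ≤ 1} n ≤ r ^ (u n) := by
    filter_upwards [eventually_ge_atTop 2] with n hn
    exact dn_upper hna hr0 hr1 hQ2 hcov hvnat hn (Nat.sqrt n)
  have hdn : Tendsto (fun n => dn {x : F | ‖x‖ ≤ 1} n) atTop (nhds D) :=
    tendsto_of_tendsto_of_tendsto_of_le_of_le' tendsto_const_nhds hU hlower hupper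
  have hcomp : Tendsto (fun n => dn {x : F | ‖x‖ ≤ 1} n ^ N) atTop (nhds (D ^ N)) := by
    have h := ((Real.continuousAt_rpow_const D N (Or.inl hD0.ne')).tendsto).comp hdn
    exact h
  have hpos : 0 < N * Real.log p / (e * ((q : ℝ) ^ fdeg - 1)) := by
    have hq1 : (1:ℝ) < (q:ℝ)^fdeg := by
      have : ((Q:ℕ):ℝ) = (q:ℝ)^fdeg := by push_cast [hQdef]; ring
      rw [← this]; exact hQR1
    exact div_pos (mul_pos hN (Real.log_pos hpR)) (mul_pos heR (by linarith))
  have hDN : D ^ N = Real.exp (-(N * Real.log p / (e * ((q : ℝ) ^ fdeg - 1)))) := by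
    have hcast : ((Q:ℕ):ℝ) = (q:ℝ)^fdeg := by push_cast [hQdef]; ring
    rw [hDdef, hrdef]
    rw [← Real.rpow_mul (by positivity : (0:ℝ) ≤ (p:ℝ))]
    rw [← Real.rpow_mul (by positivity : (0:ℝ) ≤ (p:ℝ))]
    rw [Real.rpow_def_of_pos (by linarith : (0:ℝ) < (p:ℝ))]
    congr 1
    rw [hcast]
    have hq1 : (1:ℝ) < (q:ℝ)^fdeg := by rw [← hcast]; exact hQR1
    have h1 : (q:ℝ)^fdeg - 1 ≠ 0 := by linarith
    have he0 : (e:ℝ) ≠ 0 := by linarith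
    field_simp
  refine ⟨?_, ?_⟩
  · rw [← hDN]
    exact hcomp
  · rw [Real.log_exp]
    linarith
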